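/- In the reduction from ∀∃-4-Partition to non-existence of stable SPR matchings (Lemma 4 construction), if for every map σ : [ℓ] → {0,1} there exists a σ-satisfying 4-partition of W, then the constructed SPR instance admits no stable matching. Specifically, any stable matching would force the unit resource r_1 onto the sub-instance {s_a, s_b, p_a, p_b} with cyclic preferences (s_a : p_a ≻ p_b; s_b : p_b ≻ p_a; p_a : s_b ≻ s_a; p_b : s_a ≻ s_b), which has no stable matching with one unit seat. -/

import Mathlib

open scoped Classical
open Finset

/-- A Student-Project-Resource (SPR) instance.  Students have strict preferences
over `Option P` (`none` = being unmatched, ∅), projects over `Option S`.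
Each resource has a positive capacity and a set of compatible projects. -/
structure SPR (S P R : Type) [Fintype S] [Fintype R] where
  prefS : S → Option P → Option P → Prop
  prefP : P → Option S → Option S → Prop
  q : R → ℕ
  qpos : ∀ r, 0 < q r
  T : R → Set P

namespace SPR

variable {S P R : Type} [Fintype S] [Fintype R] (I : SPR S P R)

/-- Project `p` is acceptable to student `s`. -/
def accS (s : S) (p : P) : Prop := I.prefS s (some p) none

/-- Student `s` is acceptable to project `p`. -/
def accP (p : P) (s : S) : Prop := I.prefP p (some s) none

/-- A matching assigns each student at most one project, acceptable to both. -/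
def IsMatching (Y : S → Option P) : Prop :=
  ∀ s p, Y s = some p → I.accS s p ∧ I.accP p s

/-- An allocation maps every resource to a compatible project. -/
def IsAlloc (μ : R → P) : Prop := ∀ r, μ r ∈ I.T r

/-- Total capacity provided to project `p` by allocation `μ`. -/
noncomputable def cap (μ : R → P) (p : P) : ℕ :=
  ∑ r ∈ univ.filter (fun r => μ r = p), I.q r

/-- Number of students matched to project `p` in matching `Y`. -/
noncomputable def assigned (Y : S → Option P) (p : P) : ℕ :=
  (univ.filter (fun s => Y s = some p)).card

/-- `(Y, μ)` is feasible. -/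
def Feasible (Y : S → Option P) (μ : R → P) : Prop :=
  I.IsMatching Y ∧ I.IsAlloc μ ∧ ∀ p, SPR.assigned Y p ≤ I.cap μ p

/-- `(s, p)` is a claiming pair of matching `Y`. -/
def ClaimingPair (Y : S → Option P) (s : S) (p : P) : Prop :=
  I.accP p s ∧ Y s ≠ some p ∧ I.prefS s (some p) (Y s) ∧
    ∃ μ', I.Feasible (Function.update Y s (some p)) μ'

/-- `(s, p)` is an envious pair of matching `Y`. -/
def EnviousPair (Y : S → Option P) (s : S) (p : P) : Prop :=
  I.accP p s ∧ Y s ≠ some p ∧ I.prefS s (some p) (Y s) ∧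
    ∃ s', Y s' = some p ∧ I.prefP p (some s) (some s')

def Nonwasteful (Y : S → Option P) (μ : R → P) : Prop :=
  I.Feasible Y μ ∧ ∀ s p, ¬ I.ClaimingPair Y s p

def Fair (Y : S → Option P) (μ : R → P) : Prop :=
  I.Feasible Y μ ∧ ∀ s p, ¬ I.EnviousPair Y s p

def Stable (Y : S → Option P) (μ : R → P) : Prop :=
  I.Nonwasteful Y μ ∧ I.Fair Y μ

/-- `Y'` Pareto dominates `Y` (students all weakly better, one strictly). -/
def ParetoDom (Y' Y : S → Option P) : Prop :=
  (∀ s, Y' s = Y s ∨ I.prefS s (Y' s) (Y s)) ∧ ∃ s, I.prefS s (Y' s) (Y s)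

/-- `Y` is Pareto efficient among feasible matchings. -/
def ParetoEfficient (Y : S → Option P) : Prop :=
  ∀ Y' μ', I.Feasible Y' μ' → ¬ I.ParetoDom Y' Y

end SPR

section Lemma4

variable (m θ ℓ : ℕ) (w : Fin (4 * m) → ℕ) (u v : Fin ℓ → Fin (4 * m))

/-- Index `j` of `W` belongs to one of the couples `(u_i, v_i)`. -/
def InCouple (j : Fin (4 * m)) : Prop := (∃ i, u i = j) ∨ (∃ i, v i = j)

/-- A partition `f` of `W` into `m` subsets is `σ`-satisfying: every subset has
`4` elements summing to `θ`, `u_i ∈ V_i` for all `i`, and `v_i ∈ V_i` iff `σ i`. -/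
def SigmaSatisfying (hℓ : ℓ ≤ m) (σ : Fin ℓ → Bool) (f : Fin (4 * m) → Fin m) : Prop :=
  (∀ j : Fin m, (Finset.univ.filter (fun x => f x = j)).card = 4 ∧
      ∑ x ∈ Finset.univ.filter (fun x => f x = j), w x = θ) ∧
  (∀ i : Fin ℓ, f (u i) = Fin.castLE hℓ i) ∧
  (∀ i : Fin ℓ, f (v i) = Fin.castLE hℓ i ↔ σ i = true)

/-- Projects of the Figure 2 construction: `p'_1,…,p'_ℓ`, then `p_1,…,p_m`,
then `p_a` (= `false`) and `p_b` (= `true`). -/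
abbrev Proj13 := Fin ℓ ⊕ Fin m ⊕ Bool

/-- Size of the student group `s̄_i`: `θ − u_i − v_i` for `i ≤ ℓ`, `θ` otherwise. -/
def sizeS (i : Fin m) : ℕ :=
  θ - (if h : (i : ℕ) < ℓ then w (u ⟨i, h⟩) + w (v ⟨i, h⟩) else 0)

/-- Students: groups `s̄_{v_i}` of size `v_i` (preferences `p'_i ≻ p_i`), groups `s̄_i`
(wanting only `p_i`), and the two students `s_a` (= `false`) and `s_b` (= `true`). -/
abbrev Stud13 :=
  (Σ i : Fin ℓ, Fin (w (v i))) ⊕ ((Σ i : Fin m, Fin (sizeS m θ ℓ w u v i)) ⊕ Bool)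

/-- Rank of options for the students (bigger is better, `0` = unacceptable, `1` = ∅). -/
def rankS13 : Stud13 m θ ℓ w u v → Option (Proj13 m ℓ) → ℕ
  | _, none => 1
  | Sum.inl x, some p =>
      match p with
      | Sum.inl i' => if i' = x.1 then 3 else 0
      | Sum.inr (Sum.inl j) => if (j : ℕ) = (x.1 : ℕ) then 2 else 0
      | Sum.inr (Sum.inr _) => 0
  | Sum.inr (Sum.inl x), some p =>
      match p with
      | Sum.inr (Sum.inl j) => if j = x.1 then 2 else 0
      | _ => 0
  | Sum.inr (Sum.inr b), some p =>
      match p with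
      | Sum.inr (Sum.inr b') => if b' = b then 3 else 2
      | _ => 0

/-- Rank of students for the projects (bigger is better, `0` = unacceptable, `1` = ∅). -/
def rankP13 : Proj13 m ℓ → Option (Stud13 m θ ℓ w u v) → ℕ
  | _, none => 1
  | Sum.inl i, some s =>
      match s with
      | Sum.inl x => if x.1 = i then 2 else 0
      | _ => 0
  | Sum.inr (Sum.inl j), some s =>
      match s with
      | Sum.inl x => if (x.1 : ℕ) = (j : ℕ) then 3 else 0
      | Sum.inr (Sum.inl x) => if x.1 = j then 2 else 0
      | _ => 0
  | Sum.inr (Sum.inr b), some s =>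
      match s with
      | Sum.inr (Sum.inr b') => if b' = b then 2 else 3
      | _ => 0

/-- Resources: `r_{v_i}` (capacity `v_i`, compatible with `{p'_i} ∪ {p_j : j ≠ i}`),
`r_w` for `w ∈ W` outside the couples (compatible with `{p_1,…,p_m}`), and the unit
resource `r_1` (compatible with `{p_a, p_b, p_1, …, p_m}`). -/
abbrev Res13 := Fin ℓ ⊕ ({j : Fin (4 * m) // ¬ InCouple m ℓ u v j} ⊕ Unit)

/-- The SPR instance of the reduction from ∀∃-4-Partition (Lemma 4, Figure 2). -/
noncomputable def lemma4SPR (hw : ∀ j, 0 < w j) :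
    SPR (Stud13 m θ ℓ w u v) (Proj13 m ℓ) (Res13 m ℓ u v) where
  prefS s a b := rankS13 m θ ℓ w u v s b < rankS13 m θ ℓ w u v s a
  prefP p a b := rankP13 m θ ℓ w u v p b < rankP13 m θ ℓ w u v p a
  q := fun r => match r with
    | Sum.inl i => w (v i)
    | Sum.inr (Sum.inl j) => w j.1
    | Sum.inr (Sum.inr _) => 1
  qpos := by
    rintro (r | r | r) <;> dsimp only
    · exact hw _
    · exact hw _
    · omega
  T := fun r => match r with
    | Sum.inl i => {p | p = Sum.inl i ∨
        ∃ j : Fin m, (j : ℕ) ≠ (i : ℕ) ∧ p = Sum.inr (Sum.inl j)}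
    | Sum.inr (Sum.inl _) => {p | ∃ j : Fin m, p = Sum.inr (Sum.inl j)}
    | Sum.inr (Sum.inr _) => {p | (∃ j : Fin m, p = Sum.inr (Sum.inl j)) ∨
        ∃ b : Bool, p = Sum.inr (Sum.inr b)}


/-! ### Auxiliary material for the proof -/

/-- The allocation used to witness claiming pairs: `r_{v_i}` goes to `p'_i` when
`σ i`, otherwise to `p_{f(v_i)}`; `r_w` goes to `p_{f(w)}`; `r_1` goes to `p_t`. -/
def muStar (f : Fin (4 * m) → Fin m) (σ : Fin ℓ → Bool) (t : Bool) :
    Res13 m ℓ u v → Proj13 m ℓ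
  | Sum.inl i => if σ i then Sum.inl i else Sum.inr (Sum.inl (f (v i)))
  | Sum.inr (Sum.inl j) => Sum.inr (Sum.inl (f j.1))
  | Sum.inr (Sum.inr _) => Sum.inr (Sum.inr t)

lemma rankS13_none (s : Stud13 m θ ℓ w u v) : rankS13 m θ ℓ w u v s none = 1 := by
  rcases s with s | s | s <;> rfl

lemma rankP13_none (p : Proj13 m ℓ) : rankP13 m θ ℓ w u v p none = 1 := by
  rcases p with p | p | p <;> rfl

lemma sum_sigma_fin {ι : Type*} [Fintype ι] {n : ι → ℕ} (g : (Σ i, Fin (n i)) → ℕ) :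
    ∑ x : Σ i, Fin (n i), g x = ∑ i, ∑ j, g ⟨i, j⟩ := by
  rw [← Finset.univ_sigma_univ, Finset.sum_sigma]

lemma cap_eq (hw : ∀ j, 0 < w j) (ν : Res13 m ℓ u v → Proj13 m ℓ) (p : Proj13 m ℓ) :
    (lemma4SPR m θ ℓ w u v hw).cap ν p =
      (∑ i : Fin ℓ, if ν (Sum.inl i) = p then w (v i) else 0) +
      ((∑ j : {j : Fin (4 * m) // ¬ InCouple m ℓ u v j},
          if ν (Sum.inr (Sum.inl j)) = p then w j.1 else 0) +
        (if ν (Sum.inr (Sum.inr ())) = p then 1 else 0)) := by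
  rw [SPR.cap, Finset.sum_filter, Fintype.sum_sum_type, Fintype.sum_sum_type]
  simp only [lemma4SPR]
  congr 1
  · congr!
  · simp only [Finset.univ_unique, Finset.sum_singleton]; congr!

lemma assigned_eq (Y : Stud13 m θ ℓ w u v → Option (Proj13 m ℓ)) (p : Proj13 m ℓ) :
    SPR.assigned Y p =
      (∑ i : Fin ℓ, ∑ x : Fin (w (v i)), if Y (Sum.inl ⟨i, x⟩) = some p then 1 else 0) +
      ((∑ i : Fin m, ∑ x : Fin (sizeS m θ ℓ w u v i),
          if Y (Sum.inr (Sum.inl ⟨i, x⟩)) = some p then 1 else 0) +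
        (∑ b : Bool, if Y (Sum.inr (Sum.inr b)) = some p then 1 else 0)) := by
  rw [SPR.assigned, Finset.card_filter, Fintype.sum_sum_type, Fintype.sum_sum_type,
    sum_sigma_fin, sum_sigma_fin]
  congr!

lemma sum_split (huinj : Function.Injective u) (hvinj : Function.Injective v)
    (huv : ∀ i i', u i ≠ v i') (g : Fin (4 * m) → ℕ) :
    ∑ x, g x =
      (∑ j : {j : Fin (4 * m) // ¬ InCouple m ℓ u v j}, g j.1) +
      ((∑ i, g (u i)) + (∑ i, g (v i))) := by
  classical
  have h1 : ∑ j : {j : Fin (4 * m) // ¬ InCouple m ℓ u v j}, g j.1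
      = ∑ x ∈ univ.filter (fun x => ¬ InCouple m ℓ u v x), g x := by
    rw [← Finset.sum_subtype_eq_sum_filter]; simp
  have h2 : univ.filter (fun x => InCouple m ℓ u v x) = (univ.image u) ∪ (univ.image v) := by
    ext x; rw [Finset.mem_filter]; simp [InCouple]
  have hdisj : Disjoint (univ.image u) (univ.image v) := by
    rw [Finset.disjoint_left]
    rintro a ha hb
    simp only [Finset.mem_image, Finset.mem_univ, true_and] at ha hb
    obtain ⟨i, hi⟩ := ha; obtain ⟨i', hi'⟩ := hb
    exact huv i i' (hi.trans hi'.symm)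
  rw [← Finset.sum_filter_add_sum_filter_not univ (fun x => InCouple m ℓ u v x) g, h1, h2,
    Finset.sum_union hdisj, Finset.sum_image (fun a _ b _ h => huinj h),
    Finset.sum_image (fun a _ b _ h => hvinj h)]
  ring

lemma cap_p'_eq (hw : ∀ j, 0 < w j) (ν : Res13 m ℓ u v → Proj13 m ℓ)
    (hν : (lemma4SPR m θ ℓ w u v hw).IsAlloc ν) (i : Fin ℓ) :
    (lemma4SPR m θ ℓ w u v hw).cap ν (Sum.inl i)
      = if ν (Sum.inl i) = Sum.inl i then w (v i) else 0 := by
  rw [cap_eq]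
  have h2 : ∀ j : {j : Fin (4 * m) // ¬ InCouple m ℓ u v j},
      ν (Sum.inr (Sum.inl j)) ≠ Sum.inl i := by
    intro j
    have := hν (Sum.inr (Sum.inl j))
    simp only [lemma4SPR, Set.mem_setOf_eq] at this
    obtain ⟨j', hj'⟩ := this
    simp [hj']
  have h3 : ν (Sum.inr (Sum.inr ())) ≠ Sum.inl i := by
    have := hν (Sum.inr (Sum.inr ()))
    simp only [lemma4SPR, Set.mem_setOf_eq] at this
    rcases this with ⟨j', hj'⟩ | ⟨b, hb⟩
    · simp [hj']
    · simp [hb]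
  rw [Finset.sum_eq_single i]
  · simp [h2, h3]
  · intro i' _ hne
    have := hν (Sum.inl i')
    simp only [lemma4SPR, Set.mem_setOf_eq] at this
    rcases this with h | ⟨j', _, hj'⟩
    · rw [h]; exact if_neg (by simpa using hne)
    · simp [hj']
  · intro h; exact absurd (Finset.mem_univ i) h


lemma isAlloc_muStar (hℓ : ℓ ≤ m) (hw : ∀ j, 0 < w j) {σ : Fin ℓ → Bool}
    {f : Fin (4 * m) → Fin m} (hσf : SigmaSatisfying m θ ℓ w u v hℓ σ f) (t : Bool) :
    (lemma4SPR m θ ℓ w u v hw).IsAlloc (muStar m ℓ u v f σ t) := by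
  rintro (i | j | x)
  · by_cases hσ : σ i
    · simp [lemma4SPR, muStar, hσ]
    · simp only [lemma4SPR, muStar, hσ, if_false, Set.mem_setOf_eq, Bool.false_eq_true]
      refine Or.inr ⟨f (v i), ?_, rfl⟩
      intro hval
      have h1 : f (v i) = Fin.castLE hℓ i := Fin.ext (by simpa using hval)
      exact hσ ((hσf.2.2 i).mp h1)
  · simp only [lemma4SPR, muStar, Set.mem_setOf_eq]
    exact ⟨f j.1, rfl⟩
  · simp only [lemma4SPR, muStar, Set.mem_setOf_eq]
    exact Or.inr ⟨t, rfl⟩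

lemma capStar_pab (hw : ∀ j, 0 < w j) (f : Fin (4 * m) → Fin m) (σ : Fin ℓ → Bool)
    (t : Bool) (b : Bool) :
    (lemma4SPR m θ ℓ w u v hw).cap (muStar m ℓ u v f σ t) (Sum.inr (Sum.inr b))
      = if t = b then 1 else 0 := by
  rw [cap_eq]
  have h1 : ∀ i : Fin ℓ,
      (if muStar m ℓ u v f σ t (Sum.inl i) = (Sum.inr (Sum.inr b) : Proj13 m ℓ)
        then w (v i) else 0) = 0 := by
    intro i; by_cases hσ : σ i <;> simp [muStar, hσ]
  have h2 : ∀ j : {j : Fin (4 * m) // ¬ InCouple m ℓ u v j},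
      (if muStar m ℓ u v f σ t (Sum.inr (Sum.inl j)) = (Sum.inr (Sum.inr b) : Proj13 m ℓ)
        then w j.1 else 0) = 0 := by
    intro j; simp [muStar]
  rw [Finset.sum_congr rfl (fun i _ => h1 i), Finset.sum_congr rfl (fun j _ => h2 j)]
  simp only [Finset.sum_const_zero, zero_add, muStar]
  by_cases ht : t = b <;> simp [ht]

lemma capStar_p' (hℓ : ℓ ≤ m) (hw : ∀ j, 0 < w j) {σ : Fin ℓ → Bool}
    {f : Fin (4 * m) → Fin m} (hσf : SigmaSatisfying m θ ℓ w u v hℓ σ f) (t : Bool)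
    (i : Fin ℓ) :
    (lemma4SPR m θ ℓ w u v hw).cap (muStar m ℓ u v f σ t) (Sum.inl i)
      = if σ i then w (v i) else 0 := by
  rw [cap_p'_eq m θ ℓ w u v hw _ (isAlloc_muStar m θ ℓ w u v hℓ hw hσf t) i]
  by_cases hσ : σ i <;> simp [muStar, hσ]

lemma capStar_p (hℓ : ℓ ≤ m) (hw : ∀ j, 0 < w j)
    (huinj : Function.Injective u) (hvinj : Function.Injective v)
    (huv : ∀ i i', u i ≠ v i') {σ : Fin ℓ → Bool} {f : Fin (4 * m) → Fin m}
    (hσf : SigmaSatisfying m θ ℓ w u v hℓ σ f) (t : Bool) (i : Fin m) :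
    (lemma4SPR m θ ℓ w u v hw).cap (muStar m ℓ u v f σ t) (Sum.inr (Sum.inl i))
      + ((if h : (i : ℕ) < ℓ then w (u ⟨(i : ℕ), h⟩) else 0)
        + (if h : (i : ℕ) < ℓ then (if σ ⟨(i : ℕ), h⟩ then w (v ⟨(i : ℕ), h⟩) else 0) else 0))
      = θ := by
  have hθ : ∑ x, (if f x = i then w x else 0) = θ := by
    rw [← Finset.sum_filter]; exact (hσf.1 i).2
  rw [sum_split m ℓ u v huinj hvinj huv] at hθ
  have hu : (∑ i' : Fin ℓ, if f (u i') = i then w (u i') else 0)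
      = (if h : (i : ℕ) < ℓ then w (u ⟨(i : ℕ), h⟩) else 0) := by
    by_cases h : (i : ℕ) < ℓ
    · rw [dif_pos h, Finset.sum_eq_single ⟨(i : ℕ), h⟩]
      · rw [hσf.2.1 ⟨(i : ℕ), h⟩, if_pos (Fin.ext (by simp))]
      · intro i' _ hne
        rw [hσf.2.1 i', if_neg]
        intro hcast
        exact hne (Fin.ext (by simpa using congrArg Fin.val hcast))
      · intro h'; exact absurd (Finset.mem_univ _) h'
    · rw [dif_neg h, Finset.sum_eq_zero]
      intro i' _
      rw [hσf.2.1 i', if_neg]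
      intro hcast
      have h2 := congrArg Fin.val hcast
      simp only [Fin.coe_castLE] at h2
      have := i'.isLt
      omega
  have hvsplit : ∀ i' : Fin ℓ, (if f (v i') = i then w (v i') else 0)
      = (if σ i' = false ∧ f (v i') = i then w (v i') else 0)
        + (if σ i' = true ∧ f (v i') = i then w (v i') else 0) := by
    intro i'
    by_cases hσ : σ i' <;> by_cases hf : f (v i') = i <;> simp [hσ, hf]
  have hv1 : (∑ i' : Fin ℓ, if σ i' = true ∧ f (v i') = i then w (v i') else 0)
      = (if h : (i : ℕ) < ℓ then (if σ ⟨(i : ℕ), h⟩ then w (v ⟨(i : ℕ), h⟩) else 0) else 0) := by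
    by_cases h : (i : ℕ) < ℓ
    · rw [dif_pos h, Finset.sum_eq_single ⟨(i : ℕ), h⟩]
      · by_cases hσ : σ ⟨(i : ℕ), h⟩
        · rw [if_pos ⟨hσ, by rw [(hσf.2.2 _).mpr hσ]; exact Fin.ext (by simp)⟩, if_pos hσ]
        · rw [if_neg (by simp [hσ]), if_neg hσ]
      · intro i' _ hne
        by_cases hσ : σ i'
        · rw [if_neg]
          rintro ⟨-, hf2⟩
          rw [(hσf.2.2 i').mpr hσ] at hf2
          exact hne (Fin.ext (by simpa using congrArg Fin.val hf2))
        · rw [if_neg]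
          rintro ⟨hh, -⟩
          exact hσ hh
      · intro h'; exact absurd (Finset.mem_univ _) h'
    · rw [dif_neg h, Finset.sum_eq_zero]
      intro i' _
      by_cases hσ : σ i'
      · rw [if_neg]
        rintro ⟨-, hf2⟩
        rw [(hσf.2.2 i').mpr hσ] at hf2
        have h2 := congrArg Fin.val hf2
        simp only [Fin.coe_castLE] at h2
        have := i'.isLt
        omega
      · rw [if_neg]
        rintro ⟨hh, -⟩
        exact hσ hh
  have hcap : (lemma4SPR m θ ℓ w u v hw).cap (muStar m ℓ u v f σ t) (Sum.inr (Sum.inl i))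
      = (∑ i' : Fin ℓ, if σ i' = false ∧ f (v i') = i then w (v i') else 0)
        + (∑ j : {j : Fin (4 * m) // ¬ InCouple m ℓ u v j}, if f j.1 = i then w j.1 else 0) := by
    rw [cap_eq]
    have h1 : ∀ i' : Fin ℓ,
        (if muStar m ℓ u v f σ t (Sum.inl i') = (Sum.inr (Sum.inl i) : Proj13 m ℓ)
          then w (v i') else 0) = (if σ i' = false ∧ f (v i') = i then w (v i') else 0) := by
      intro i'; by_cases hσ : σ i' <;> simp [muStar, hσ]
    have h2 : ∀ j : {j : Fin (4 * m) // ¬ InCouple m ℓ u v j},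
        (if muStar m ℓ u v f σ t (Sum.inr (Sum.inl j)) = (Sum.inr (Sum.inl i) : Proj13 m ℓ)
          then w j.1 else 0) = (if f j.1 = i then w j.1 else 0) := by
      intro j; simp [muStar]
    rw [Finset.sum_congr rfl (fun i' _ => h1 i'), Finset.sum_congr rfl (fun j _ => h2 j)]
    simp [muStar]
  rw [Finset.sum_congr rfl (fun i' _ => hvsplit i'), Finset.sum_add_distrib, hv1, hu] at hθ
  rw [hcap]
  omega

lemma update_congr {α β : Type*} (inst1 : DecidableEq α) [DecidableEq α]
    (f : α → β) (a : α) (b : β) :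
    @Function.update α (fun _ => β) inst1 f a b = Function.update f a b := by
  funext x
  by_cases h : x = a <;> simp [Function.update_apply, h]

lemma assigned_update_le (Y : Stud13 m θ ℓ w u v → Option (Proj13 m ℓ))
    (s : Stud13 m θ ℓ w u v) (p₀ p : Proj13 m ℓ) (h : p ≠ p₀) :
    SPR.assigned (Function.update Y s (some p₀)) p ≤ SPR.assigned Y p := by
  apply Finset.card_le_card
  intro s' hs'
  simp only [Finset.mem_filter, Finset.mem_univ, true_and] at hs' ⊢
  by_cases hss : s' = s
  · subst hss
    rw [Function.update_self] at hs'
    exact absurd (Option.some.inj hs').symm h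
  · rwa [Function.update_of_ne hss] at hs'

lemma rank_of_matched (hw : ∀ j, 0 < w j) (Y : Stud13 m θ ℓ w u v → Option (Proj13 m ℓ))
    (hmatch : (lemma4SPR m θ ℓ w u v hw).IsMatching Y)
    (s : Stud13 m θ ℓ w u v) (p : Proj13 m ℓ) (hs : Y s = some p) :
    1 < rankS13 m θ ℓ w u v s (some p) := by
  have h := (hmatch s p hs).1
  have h2 : rankS13 m θ ℓ w u v s none < rankS13 m θ ℓ w u v s (some p) := h
  rwa [rankS13_none] at h2

lemma assigned_p'_le (hw : ∀ j, 0 < w j) (Y : Stud13 m θ ℓ w u v → Option (Proj13 m ℓ))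
    (hmatch : (lemma4SPR m θ ℓ w u v hw).IsMatching Y) (i : Fin ℓ) :
    SPR.assigned Y (Sum.inl i) ≤ w (v i) := by
  rw [assigned_eq]
  have h3 : ∀ b : Bool,
      (if Y (Sum.inr (Sum.inr b)) = some (Sum.inl i : Proj13 m ℓ) then 1 else 0) = 0 := by
    intro b
    rw [if_neg]
    intro hy
    have := rank_of_matched m θ ℓ w u v hw Y hmatch _ _ hy
    simp [rankS13] at this
  have h5 : ∀ (i' : Fin m) (x : Fin (sizeS m θ ℓ w u v i')),
      (if Y (Sum.inr (Sum.inl ⟨i', x⟩)) = some (Sum.inl i : Proj13 m ℓ) then 1 else 0) = 0 := by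
    intro i' x
    rw [if_neg]
    intro hy
    have := rank_of_matched m θ ℓ w u v hw Y hmatch _ _ hy
    simp [rankS13] at this
  have h4 : ∀ i' : Fin ℓ, i' ≠ i → ∀ x : Fin (w (v i')),
      (if Y (Sum.inl ⟨i', x⟩) = some (Sum.inl i : Proj13 m ℓ) then 1 else 0) = 0 := by
    intro i' hne x
    rw [if_neg]
    intro hy
    have := rank_of_matched m θ ℓ w u v hw Y hmatch _ _ hy
    simp only [rankS13] at this
    rw [if_neg (fun hh => hne hh.symm)] at this
    omega
  have hA : (∑ i' : Fin ℓ, ∑ x : Fin (w (v i')),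
      if Y (Sum.inl ⟨i', x⟩) = some (Sum.inl i : Proj13 m ℓ) then 1 else 0)
      = ∑ x : Fin (w (v i)), if Y (Sum.inl ⟨i, x⟩) = some (Sum.inl i : Proj13 m ℓ) then 1 else 0 := by
    apply Finset.sum_eq_single
    · intro i' _ hne
      exact Finset.sum_eq_zero fun x _ => h4 i' hne x
    · intro h'; exact absurd (Finset.mem_univ _) h'
  have hA2 : (∑ x : Fin (w (v i)),
      if Y (Sum.inl ⟨i, x⟩) = some (Sum.inl i : Proj13 m ℓ) then 1 else 0) ≤ w (v i) := by
    calc (∑ x : Fin (w (v i)),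
        if Y (Sum.inl ⟨i, x⟩) = some (Sum.inl i : Proj13 m ℓ) then 1 else 0)
        ≤ ∑ _x : Fin (w (v i)), 1 := Finset.sum_le_sum (fun x _ => by split <;> omega)
      _ = w (v i) := by simp
  have hB : (∑ i' : Fin m, ∑ x : Fin (sizeS m θ ℓ w u v i'),
      if Y (Sum.inr (Sum.inl ⟨i', x⟩)) = some (Sum.inl i : Proj13 m ℓ) then 1 else 0) = 0 :=
    Finset.sum_eq_zero fun i' _ => Finset.sum_eq_zero fun x _ => h5 i' x
  have hC : (∑ b : Bool,
      if Y (Sum.inr (Sum.inr b)) = some (Sum.inl i : Proj13 m ℓ) then 1 else 0) = 0 :=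
    Finset.sum_eq_zero fun b _ => h3 b
  rw [hA, hB, hC]
  simpa using hA2

lemma assigned_p_le (hw : ∀ j, 0 < w j) (Y : Stud13 m θ ℓ w u v → Option (Proj13 m ℓ))
    (σ : Fin ℓ → Bool) (hmatch : (lemma4SPR m θ ℓ w u v hw).IsMatching Y)
    (hallp' : ∀ i₀ : Fin ℓ, σ i₀ = true → ∀ x, Y (Sum.inl ⟨i₀, x⟩) = some (Sum.inl i₀))
    (i : Fin m) :
    SPR.assigned Y (Sum.inr (Sum.inl i)) ≤
      (if h : (i : ℕ) < ℓ then (if σ ⟨(i : ℕ), h⟩ then 0 else w (v ⟨(i : ℕ), h⟩)) else 0)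
        + sizeS m θ ℓ w u v i := by
  rw [assigned_eq]
  have hC : ∀ b : Bool,
      (if Y (Sum.inr (Sum.inr b)) = some (Sum.inr (Sum.inl i) : Proj13 m ℓ) then 1 else 0) = 0 := by
    intro b
    rw [if_neg]
    intro hy
    have := rank_of_matched m θ ℓ w u v hw Y hmatch _ _ hy
    simp [rankS13] at this
  have hB : (∑ i' : Fin m, ∑ x : Fin (sizeS m θ ℓ w u v i'),
      if Y (Sum.inr (Sum.inl ⟨i', x⟩)) = some (Sum.inr (Sum.inl i) : Proj13 m ℓ) then 1 else 0)
      ≤ sizeS m θ ℓ w u v i := by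
    have heq : (∑ i' : Fin m, ∑ x : Fin (sizeS m θ ℓ w u v i'),
        if Y (Sum.inr (Sum.inl ⟨i', x⟩)) = some (Sum.inr (Sum.inl i) : Proj13 m ℓ) then 1 else 0)
        = ∑ x : Fin (sizeS m θ ℓ w u v i),
            if Y (Sum.inr (Sum.inl ⟨i, x⟩)) = some (Sum.inr (Sum.inl i) : Proj13 m ℓ) then 1 else 0 := by
      apply Finset.sum_eq_single
      · intro i' _ hne
        apply Finset.sum_eq_zero
        intro x _
        rw [if_neg]
        intro hy
        have := rank_of_matched m θ ℓ w u v hw Y hmatch _ _ hy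
        simp only [rankS13] at this
        rw [if_neg (fun hh => hne hh.symm)] at this
        omega
      · intro h'; exact absurd (Finset.mem_univ _) h'
    rw [heq]
    calc (∑ x : Fin (sizeS m θ ℓ w u v i),
        if Y (Sum.inr (Sum.inl ⟨i, x⟩)) = some (Sum.inr (Sum.inl i) : Proj13 m ℓ) then 1 else 0)
        ≤ ∑ _x : Fin (sizeS m θ ℓ w u v i), 1 := Finset.sum_le_sum (fun x _ => by split <;> omega)
      _ = sizeS m θ ℓ w u v i := by simp
  have hA : (∑ i' : Fin ℓ, ∑ x : Fin (w (v i')),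
      if Y (Sum.inl ⟨i', x⟩) = some (Sum.inr (Sum.inl i) : Proj13 m ℓ) then 1 else 0)
      ≤ (if h : (i : ℕ) < ℓ then (if σ ⟨(i : ℕ), h⟩ then 0 else w (v ⟨(i : ℕ), h⟩)) else 0) := by
    have hz : ∀ i' : Fin ℓ, (i' : ℕ) ≠ (i : ℕ) → ∀ x : Fin (w (v i')),
        (if Y (Sum.inl ⟨i', x⟩) = some (Sum.inr (Sum.inl i) : Proj13 m ℓ) then 1 else 0) = 0 := by
      intro i' hne x
      rw [if_neg]
      intro hy
      have := rank_of_matched m θ ℓ w u v hw Y hmatch _ _ hy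
      simp only [rankS13] at this
      rw [if_neg (fun hh => hne hh.symm)] at this
      omega
    by_cases h : (i : ℕ) < ℓ
    · rw [dif_pos h]
      have heq : (∑ i' : Fin ℓ, ∑ x : Fin (w (v i')),
          if Y (Sum.inl ⟨i', x⟩) = some (Sum.inr (Sum.inl i) : Proj13 m ℓ) then 1 else 0)
          = ∑ x : Fin (w (v ⟨(i : ℕ), h⟩)),
              if Y (Sum.inl ⟨⟨(i : ℕ), h⟩, x⟩) = some (Sum.inr (Sum.inl i) : Proj13 m ℓ)
              then 1 else 0 := by
        apply Finset.sum_eq_single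
        · intro i' _ hne
          apply Finset.sum_eq_zero
          intro x _
          apply hz
          intro hval
          exact hne (Fin.ext hval)
        · intro h'; exact absurd (Finset.mem_univ _) h'
      rw [heq]
      by_cases hσ : σ ⟨(i : ℕ), h⟩
      · rw [if_pos hσ, Finset.sum_eq_zero]
        intro x _
        rw [if_neg]
        rw [hallp' ⟨(i : ℕ), h⟩ hσ x]
        simp
      · rw [if_neg hσ]
        calc (∑ x : Fin (w (v ⟨(i : ℕ), h⟩)),
            if Y (Sum.inl ⟨⟨(i : ℕ), h⟩, x⟩) = some (Sum.inr (Sum.inl i) : Proj13 m ℓ)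
            then 1 else 0)
            ≤ ∑ _x : Fin (w (v ⟨(i : ℕ), h⟩)), 1 := Finset.sum_le_sum (fun x _ => by split <;> omega)
          _ = w (v ⟨(i : ℕ), h⟩) := by simp
    · rw [dif_neg h, Finset.sum_eq_zero]
      intro i' _
      apply Finset.sum_eq_zero
      intro x _
      apply hz
      intro hval
      rw [← hval] at h
      exact h i'.isLt
  have hC' : (∑ b : Bool,
      if Y (Sum.inr (Sum.inr b)) = some (Sum.inr (Sum.inl i) : Proj13 m ℓ) then 1 else 0) = 0 :=
    Finset.sum_eq_zero fun b _ => hC b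
  omega

/-- if for every map `σ : [ℓ] → {0,1}` there exists a `σ`-satisfying
4-partition of `W`, then the SPR instance of the Lemma 4 construction admits no
stable matching. -/
theorem no_stable_matching_of_forall_sigma_satisfying
    (hℓ : ℓ ≤ m) (hw : ∀ j, 0 < w j)
    (hlow : ∀ j, θ < 5 * w j) (hhigh : ∀ j, 3 * w j < θ)
    (huinj : Function.Injective u) (hvinj : Function.Injective v)
    (huv : ∀ i i', u i ≠ v i')
    (hall : ∀ σ : Fin ℓ → Bool, ∃ f : Fin (4 * m) → Fin m,
      SigmaSatisfying m θ ℓ w u v hℓ σ f) :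
    ¬ ∃ (Y : Stud13 m θ ℓ w u v → Option (Proj13 m ℓ))
        (μ : Res13 m ℓ u v → Proj13 m ℓ),
        (lemma4SPR m θ ℓ w u v hw).Stable Y μ := by
  rintro ⟨Y, μ, ⟨⟨hfeas, hclaim⟩, ⟨-, hfair⟩⟩⟩
  obtain ⟨hmatch, halloc, hcap⟩ := hfeas
  classical
  set σ : Fin ℓ → Bool := fun i => decide (μ (Sum.inl i) = Sum.inl i) with hσdef
  obtain ⟨f, hσf⟩ := hall σ
  obtain ⟨f₁, hf₁⟩ := hall (fun _ => true)
  have haccS : ∀ s p, Y s = some p → 1 < rankS13 m θ ℓ w u v s (some p) :=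
    fun s p hs => rank_of_matched m θ ℓ w u v hw Y hmatch s p hs
  -- each couple fits in θ
  have huvle : ∀ i : Fin ℓ, w (u i) + w (v i) ≤ θ := by
    intro i
    have h4 := (hf₁.1 (Fin.castLE hℓ i)).2
    have hsub : ({u i, v i} : Finset (Fin (4 * m)))
        ⊆ univ.filter (fun x => f₁ x = Fin.castLE hℓ i) := by
      intro x hx
      simp only [Finset.mem_insert, Finset.mem_singleton] at hx
      rcases hx with rfl | rfl
      · simp [hf₁.2.1 i]
      · simp [(hf₁.2.2 i).mpr rfl]
    calc w (u i) + w (v i) = ∑ x ∈ ({u i, v i} : Finset _), w x :=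
          (Finset.sum_pair (huv i i)).symm
      _ ≤ ∑ x ∈ univ.filter (fun x => f₁ x = Fin.castLE hℓ i), w x :=
          Finset.sum_le_sum_of_subset hsub
      _ = θ := h4
  -- σ-true groups are fully matched to their p'
  have hallp' : ∀ i₀ : Fin ℓ, σ i₀ = true → ∀ x, Y (Sum.inl ⟨i₀, x⟩) = some (Sum.inl i₀) := by
    intro i₀ hσ x
    by_contra hne
    have hμi : μ (Sum.inl i₀) = Sum.inl i₀ := by
      have h := hσ
      rw [hσdef] at h
      exact of_decide_eq_true h
    have hmatch' : (lemma4SPR m θ ℓ w u v hw).IsMatching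
        (Function.update Y (Sum.inl ⟨i₀, x⟩) (some (Sum.inl i₀))) := by
      intro s p hs
      by_cases hss : s = Sum.inl ⟨i₀, x⟩
      · subst hss
        rw [Function.update_self] at hs
        cases Option.some.inj hs
        constructor
        · show rankS13 m θ ℓ w u v _ none < rankS13 m θ ℓ w u v _ (some _)
          rw [rankS13_none]
          simp [rankS13]
        · show rankP13 m θ ℓ w u v _ none < rankP13 m θ ℓ w u v _ (some _)
          rw [rankP13_none]
          simp [rankP13]
      · rw [Function.update_of_ne hss] at hs
        exact hmatch s p hs
    apply hclaim (Sum.inl ⟨i₀, x⟩) (Sum.inl i₀)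
    refine ⟨?_, hne, ?_, μ, ?_⟩
    · show rankP13 m θ ℓ w u v _ none < rankP13 m θ ℓ w u v _ (some _)
      rw [rankP13_none]
      simp [rankP13]
    · show rankS13 m θ ℓ w u v _ (Y (Sum.inl ⟨i₀, x⟩))
        < rankS13 m θ ℓ w u v _ (some (Sum.inl i₀))
      have hr3 : rankS13 m θ ℓ w u v (Sum.inl ⟨i₀, x⟩) (some (Sum.inl i₀)) = 3 := by
        simp [rankS13]
      rw [hr3]
      rcases hY : Y (Sum.inl ⟨i₀, x⟩) with _ | (i' | j | b)
      · rw [rankS13_none]; omega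
      · by_cases hii : i' = i₀
        · subst hii; exact absurd hY hne
        · simp only [rankS13]
          rw [if_neg hii]
          omega
      · simp only [rankS13]
        split <;> omega
      · simp [rankS13]
    · rw [update_congr _ Y (Sum.inl ⟨i₀, x⟩) (some (Sum.inl i₀))]
      refine ⟨hmatch', halloc, ?_⟩
      intro p
      by_cases hpp : p = Sum.inl i₀
      · subst hpp
        have hle := assigned_p'_le m θ ℓ w u v hw _ hmatch' i₀
        rw [cap_p'_eq m θ ℓ w u v hw μ halloc i₀, if_pos hμi]
        exact hle
      · exact le_trans (assigned_update_le m θ ℓ w u v Y _ _ _ hpp) (hcap p)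
  -- the key feasibility fact
  have hkey : ∀ c : Bool, Y (Sum.inr (Sum.inr (!c))) = none →
      (lemma4SPR m θ ℓ w u v hw).Feasible
        (Function.update Y (Sum.inr (Sum.inr c)) (some (Sum.inr (Sum.inr c))))
        (muStar m ℓ u v f σ c) := by
    intro c hother
    have hmatch' : (lemma4SPR m θ ℓ w u v hw).IsMatching
        (Function.update Y (Sum.inr (Sum.inr c)) (some (Sum.inr (Sum.inr c)))) := by
      intro s p hs
      by_cases hss : s = Sum.inr (Sum.inr c)
      · subst hss
        rw [Function.update_self] at hs
        cases Option.some.inj hs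
        constructor
        · show rankS13 m θ ℓ w u v _ none < rankS13 m θ ℓ w u v _ (some _)
          rw [rankS13_none]
          cases c <;> simp [rankS13]
        · show rankP13 m θ ℓ w u v _ none < rankP13 m θ ℓ w u v _ (some _)
          rw [rankP13_none]
          cases c <;> simp [rankP13]
      · rw [Function.update_of_ne hss] at hs
        exact hmatch s p hs
    refine ⟨hmatch', isAlloc_muStar m θ ℓ w u v hℓ hw hσf c, ?_⟩
    rintro (i | i | b)
    · have h1 := assigned_update_le m θ ℓ w u v Y (Sum.inr (Sum.inr c))
        (Sum.inr (Sum.inr c)) (Sum.inl i) (by simp)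
      have h2 := hcap (Sum.inl i)
      rw [cap_p'_eq m θ ℓ w u v hw μ halloc i] at h2
      rw [capStar_p' m θ ℓ w u v hℓ hw hσf c i]
      have h3 : (if σ i then w (v i) else 0)
          = (if μ (Sum.inl i) = Sum.inl i then w (v i) else 0) := by
        by_cases hh : μ (Sum.inl i) = Sum.inl i <;> simp [hσdef, hh]
      rw [h3]
      exact le_trans h1 h2
    · have h1 := assigned_update_le m θ ℓ w u v Y (Sum.inr (Sum.inr c))
        (Sum.inr (Sum.inr c)) (Sum.inr (Sum.inl i)) (by simp)
      have h2 := assigned_p_le m θ ℓ w u v hw Y σ hmatch hallp' i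
      have h3 := capStar_p m θ ℓ w u v hℓ hw huinj hvinj huv hσf c i
      have h4 : sizeS m θ ℓ w u v i
          = θ - (if h : (i : ℕ) < ℓ then w (u ⟨(i : ℕ), h⟩) + w (v ⟨(i : ℕ), h⟩) else 0) := rfl
      by_cases h : (i : ℕ) < ℓ
      · have h5 := huvle ⟨(i : ℕ), h⟩
        rw [dif_pos h] at h4
        rw [dif_pos h, dif_pos h] at h3
        rw [dif_pos h] at h2
        by_cases hσi : σ ⟨(i : ℕ), h⟩ = true
        · rw [if_pos hσi] at h2 h3
          omega
        · rw [if_neg hσi] at h2 h3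
          omega
      · rw [dif_neg h] at h4
        rw [dif_neg h, dif_neg h] at h3
        rw [dif_neg h] at h2
        omega
    · rw [capStar_pab m θ ℓ w u v hw f σ c b, assigned_eq]
      have hA : (∑ i' : Fin ℓ, ∑ x : Fin (w (v i')),
          if Function.update Y (Sum.inr (Sum.inr c)) (some (Sum.inr (Sum.inr c)))
              (Sum.inl ⟨i', x⟩) = some (Sum.inr (Sum.inr b) : Proj13 m ℓ) then 1 else 0) = 0 := by
        apply Finset.sum_eq_zero
        intro i' _
        apply Finset.sum_eq_zero
        intro x _
        rw [Function.update_of_ne (by simp)]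
        exact if_neg (fun hy => by have := haccS _ _ hy; simp [rankS13] at this)
      have hB : (∑ i' : Fin m, ∑ x : Fin (sizeS m θ ℓ w u v i'),
          if Function.update Y (Sum.inr (Sum.inr c)) (some (Sum.inr (Sum.inr c)))
              (Sum.inr (Sum.inl ⟨i', x⟩)) = some (Sum.inr (Sum.inr b) : Proj13 m ℓ)
          then 1 else 0) = 0 := by
        apply Finset.sum_eq_zero
        intro i' _
        apply Finset.sum_eq_zero
        intro x _
        rw [Function.update_of_ne (by simp)]
        exact if_neg (fun hy => by have := haccS _ _ hy; simp [rankS13] at this)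
      have hc1 : Function.update Y (Sum.inr (Sum.inr c)) (some (Sum.inr (Sum.inr c)))
          (Sum.inr (Sum.inr c)) = some (Sum.inr (Sum.inr c)) := Function.update_self _ _ _
      have hc2 : Function.update Y (Sum.inr (Sum.inr c)) (some (Sum.inr (Sum.inr c)))
          (Sum.inr (Sum.inr (!c))) = none := by
        rw [Function.update_of_ne (by cases c <;> simp)]
        exact hother
      rw [hA, hB, Fintype.sum_bool]
      cases c
      · rw [show (!false) = true from rfl] at hc2
        rw [hc1, hc2]
        cases b <;> simp
      · rw [show (!true) = false from rfl] at hc2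
        rw [hc1, hc2]
        cases b <;> simp
  -- claiming pair for an a/b student whose current rank is < 3
  have hclaimc : ∀ c : Bool, Y (Sum.inr (Sum.inr (!c))) = none →
      rankS13 m θ ℓ w u v (Sum.inr (Sum.inr c)) (Y (Sum.inr (Sum.inr c))) < 3 → False := by
    intro c hother hrank
    apply hclaim (Sum.inr (Sum.inr c)) (Sum.inr (Sum.inr c))
    refine ⟨?_, ?_, ?_, muStar m ℓ u v f σ c, ?_⟩
    · show rankP13 m θ ℓ w u v _ none < rankP13 m θ ℓ w u v _ (some _)
      rw [rankP13_none]
      cases c <;> simp [rankP13]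
    · intro hY
      rw [hY] at hrank
      have : rankS13 m θ ℓ w u v (Sum.inr (Sum.inr c)) (some (Sum.inr (Sum.inr c))) = 3 := by
        cases c <;> simp [rankS13]
      omega
    · show rankS13 m θ ℓ w u v _ (Y (Sum.inr (Sum.inr c)))
        < rankS13 m θ ℓ w u v _ (some (Sum.inr (Sum.inr c)))
      have : rankS13 m θ ℓ w u v (Sum.inr (Sum.inr c)) (some (Sum.inr (Sum.inr c))) = 3 := by
        cases c <;> simp [rankS13]
      omega
    · rw [update_congr _ Y (Sum.inr (Sum.inr c)) (some (Sum.inr (Sum.inr c)))]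
      exact hkey c hother
  -- possible matches of the a/b students
  have habopt : ∀ b : Bool, Y (Sum.inr (Sum.inr b)) = none ∨
      Y (Sum.inr (Sum.inr b)) = some (Sum.inr (Sum.inr false)) ∨
      Y (Sum.inr (Sum.inr b)) = some (Sum.inr (Sum.inr true)) := by
    intro b
    rcases hY : Y (Sum.inr (Sum.inr b)) with _ | (i | j | b')
    · exact Or.inl rfl
    · have := haccS _ _ hY; simp [rankS13] at this
    · have := haccS _ _ hY; simp [rankS13] at this
    · cases b'
      · exact Or.inr (Or.inl rfl)
      · exact Or.inr (Or.inr rfl)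
  -- capacity of p_a, p_b under μ
  have hcapab : ∀ b : Bool, (lemma4SPR m θ ℓ w u v hw).cap μ (Sum.inr (Sum.inr b))
      = if μ (Sum.inr (Sum.inr ())) = Sum.inr (Sum.inr b) then 1 else 0 := by
    intro b
    rw [cap_eq]
    have h1 : ∀ i : Fin ℓ,
        (if μ (Sum.inl i) = (Sum.inr (Sum.inr b) : Proj13 m ℓ) then w (v i) else 0) = 0 := by
      intro i
      have := halloc (Sum.inl i)
      simp only [lemma4SPR, Set.mem_setOf_eq] at this
      rcases this with h | ⟨j, -, h⟩ <;> simp [h]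
    have h2 : ∀ j : {j : Fin (4 * m) // ¬ InCouple m ℓ u v j},
        (if μ (Sum.inr (Sum.inl j)) = (Sum.inr (Sum.inr b) : Proj13 m ℓ) then w j.1 else 0) = 0 := by
      intro j
      have := halloc (Sum.inr (Sum.inl j))
      simp only [lemma4SPR, Set.mem_setOf_eq] at this
      obtain ⟨j', h⟩ := this
      simp [h]
    rw [Finset.sum_congr rfl (fun i _ => h1 i), Finset.sum_congr rfl (fun j _ => h2 j)]
    simp
  -- the two a/b students cannot both be matched
  have hnotboth : ∀ b1 b2 : Bool,
      Y (Sum.inr (Sum.inr false)) = some (Sum.inr (Sum.inr b1)) →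
      Y (Sum.inr (Sum.inr true)) = some (Sum.inr (Sum.inr b2)) → False := by
    intro b1 b2 h1 h2
    have ha1 : 1 ≤ SPR.assigned Y (Sum.inr (Sum.inr b1) : Proj13 m ℓ) := by
      rw [SPR.assigned]
      refine Finset.card_pos.mpr ⟨Sum.inr (Sum.inr false), ?_⟩
      simp only [Finset.mem_filter, Finset.mem_univ, true_and]
      exact h1
    have ha2 : 1 ≤ SPR.assigned Y (Sum.inr (Sum.inr b2) : Proj13 m ℓ) := by
      rw [SPR.assigned]
      refine Finset.card_pos.mpr ⟨Sum.inr (Sum.inr true), ?_⟩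
      simp only [Finset.mem_filter, Finset.mem_univ, true_and]
      exact h2
    by_cases hbb : b1 = b2
    · subst hbb
      have h2' : 2 ≤ SPR.assigned Y (Sum.inr (Sum.inr b1) : Proj13 m ℓ) := by
        rw [SPR.assigned]
        rw [← Finset.card_pair (show (Sum.inr (Sum.inr false) : Stud13 m θ ℓ w u v)
          ≠ Sum.inr (Sum.inr true) by simp)]
        apply Finset.card_le_card
        intro s hs
        simp only [Finset.mem_insert, Finset.mem_singleton] at hs
        simp only [Finset.mem_filter, Finset.mem_univ, true_and]
        rcases hs with rfl | rfl
        · exact h1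
        · exact h2
      have h3 := hcap (Sum.inr (Sum.inr b1))
      rw [hcapab b1] at h3
      split at h3 <;> omega
    · have hc1 := le_trans ha1 (hcap _)
      have hc2 := le_trans ha2 (hcap _)
      rw [hcapab b1] at hc1
      rw [hcapab b2] at hc2
      by_cases hm1 : μ (Sum.inr (Sum.inr ())) = Sum.inr (Sum.inr b1)
      · by_cases hm2 : μ (Sum.inr (Sum.inr ())) = Sum.inr (Sum.inr b2)
        · have heq : (Sum.inr (Sum.inr b1) : Proj13 m ℓ) = Sum.inr (Sum.inr b2) :=
            hm1.symm.trans hm2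
          simp only [Sum.inr.injEq] at heq
          exact hbb heq
        · rw [if_neg hm2] at hc2; omega
      · rw [if_neg hm1] at hc1; omega
  -- final case analysis
  rcases habopt false with hsa | hsa | hsa
  · rcases habopt true with hsb | hsb | hsb
    · exact hclaimc false hsb (by rw [hsa, rankS13_none]; omega)
    · exact hclaimc true hsa (by rw [hsb]; simp [rankS13])
    · refine hfair (Sum.inr (Sum.inr false)) (Sum.inr (Sum.inr true))
        ⟨?_, ?_, ?_, Sum.inr (Sum.inr true), hsb, ?_⟩
      · show rankP13 m θ ℓ w u v _ none < rankP13 m θ ℓ w u v _ (some _)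
        rw [rankP13_none]
        simp [rankP13]
      · rw [hsa]; simp
      · show rankS13 m θ ℓ w u v _ (Y (Sum.inr (Sum.inr false)))
          < rankS13 m θ ℓ w u v _ (some (Sum.inr (Sum.inr true)))
        rw [hsa, rankS13_none]
        simp [rankS13]
      · show rankP13 m θ ℓ w u v _ (some _) < rankP13 m θ ℓ w u v _ (some _)
        simp [rankP13]
  · rcases habopt true with hsb | hsb | hsb
    · refine hfair (Sum.inr (Sum.inr true)) (Sum.inr (Sum.inr false))
        ⟨?_, ?_, ?_, Sum.inr (Sum.inr false), hsa, ?_⟩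
      · show rankP13 m θ ℓ w u v _ none < rankP13 m θ ℓ w u v _ (some _)
        rw [rankP13_none]
        simp [rankP13]
      · rw [hsb]; simp
      · show rankS13 m θ ℓ w u v _ (Y (Sum.inr (Sum.inr true)))
          < rankS13 m θ ℓ w u v _ (some (Sum.inr (Sum.inr false)))
        rw [hsb, rankS13_none]
        simp [rankS13]
      · show rankP13 m θ ℓ w u v _ (some _) < rankP13 m θ ℓ w u v _ (some _)
        simp [rankP13]
    · exact hnotboth false false hsa hsb
    · exact hnotboth false true hsa hsb
  · rcases habopt true with hsb | hsb | hsb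
    · exact hclaimc false hsb (by rw [hsa]; simp [rankS13])
    · exact hnotboth true false hsa hsb
    · exact hnotboth true true hsa hsb

end Lemma4
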